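/- arXiv:1810.05926 — 2 statements merged into one kernel-verified Lean document; each statement's English description precedes it below -/
import Mathlib

section
/- Let δ₁, δ₂, δ₃ > 0 with δ₁ + δ₂ + δ₃ = 2π, Sᵢ = sin(δᵢ/2), Cᵢ = cos(δᵢ/2). Then the ratio B(n_a, n_b) / B(n_a, n_a) = −C₁ = −cos(δ₁/2), where n_a = (1,−C₁,−C₂,−C₃), n_b = (−C₁,1,−C₃,−C₂), and B is the bilinear form (ab'+a'b+cd'+c'd)S₁ + (ac'+a'c+bd'+b'd)S₂ + (ad'+a'd+bc'+b'c)S₃; in particular the dihedral angle between the hyperplanes a = 0 and b = 0 equals δ₁/2. -/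
open Real

set_option maxHeartbeats 1000000

theorem stmt_8 (δ₁ δ₂ δ₃ : ℝ) (h₁ : 0 < δ₁) (h₂ : 0 < δ₂) (h₃ : 0 < δ₃)
    (hsum : δ₁ + δ₂ + δ₃ = 2 * π)
    (S₁ S₂ S₃ C₁ C₂ C₃ : ℝ)
    (hS₁ : S₁ = sin (δ₁ / 2)) (hS₂ : S₂ = sin (δ₂ / 2)) (hS₃ : S₃ = sin (δ₃ / 2))
    (hC₁ : C₁ = cos (δ₁ / 2)) (hC₂ : C₂ = cos (δ₂ / 2)) (hC₃ : C₃ = cos (δ₃ / 2))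
    (B : (ℝ × ℝ × ℝ × ℝ) → (ℝ × ℝ × ℝ × ℝ) → ℝ)
    (hB : ∀ a b c d a' b' c' d' : ℝ,
      B (a, b, c, d) (a', b', c', d') =
        (a * b' + a' * b + c * d' + c' * d) * S₁ +
        (a * c' + a' * c + b * d' + b' * d) * S₂ +
        (a * d' + a' * d + b * c' + b' * c) * S₃) :
    B (1, -C₁, -C₂, -C₃) (-C₁, 1, -C₃, -C₂) /
        B (1, -C₁, -C₂, -C₃) (1, -C₁, -C₂, -C₃) = -cos (δ₁ / 2) := by
  have hπ : 0 < π := Real.pi_pos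
  set s1 := sin (δ₂ / 2 + δ₃ / 2) with hs1
  set c1 := cos (δ₂ / 2 + δ₃ / 2) with hc1
  set s2 := sin (δ₂ / 2) with hs2
  set c2 := cos (δ₂ / 2) with hc2
  set s3 := sin (δ₃ / 2) with hc3'
  set c3 := cos (δ₃ / 2) with hc3
  have harg : δ₁ / 2 = π - (δ₂ / 2 + δ₃ / 2) := by linarith
  have hS1' : S₁ = s1 := by rw [hS₁, harg, Real.sin_pi_sub]
  have hC1' : C₁ = -c1 := by rw [hC₁, harg, Real.cos_pi_sub]
  have hs1e : s1 = s2 * c3 + c2 * s3 := Real.sin_add _ _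
  have hc1e : c1 = c2 * c3 - s2 * s3 := Real.cos_add _ _
  have p2 : s2 ^ 2 + c2 ^ 2 = 1 := Real.sin_sq_add_cos_sq _
  have p3 : s3 ^ 2 + c3 ^ 2 = 1 := Real.sin_sq_add_cos_sq _
  -- positivity of the sines of the half-angles
  have hδ1lt : δ₁ < 2 * π := by linarith
  have hδ2lt : δ₂ < 2 * π := by linarith
  have hδ3lt : δ₃ < 2 * π := by linarith
  have hS1pos : 0 < sin (δ₁ / 2) := Real.sin_pos_of_pos_of_lt_pi (by linarith) (by linarith)
  have hS2pos : 0 < s2 := Real.sin_pos_of_pos_of_lt_pi (by linarith) (by linarith)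
  have hS3pos : 0 < s3 := Real.sin_pos_of_pos_of_lt_pi (by linarith) (by linarith)
  have hS1pos' : 0 < s1 := by rw [← hS1', hS₁]; exact hS1pos
  rw [hB, hB]
  have hden :
      (1 * (-C₁) + 1 * (-C₁) + -C₂ * (-C₃) + -C₂ * (-C₃)) * S₁ +
        (1 * (-C₂) + 1 * (-C₂) + -C₁ * (-C₃) + -C₁ * (-C₃)) * S₂ +
        (1 * (-C₃) + 1 * (-C₃) + -C₁ * (-C₂) + -C₁ * (-C₂)) * S₃ =
      -2 * s1 * s2 * s3 := by
    rw [hS1', hC1', hS₂, hS₃, hC₂, hC₃]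
    rw [hs1e, hc1e]
    linear_combination (2 * s3 * c3) * p2 + (2 * s2 * c2) * p3
  have hnum :
      (1 * 1 + -C₁ * (-C₁) + -C₂ * (-C₂) + -C₃ * (-C₃)) * S₁ +
        (1 * (-C₃) + -C₁ * (-C₂) + -C₁ * (-C₂) + 1 * (-C₃)) * S₂ +
        (1 * (-C₂) + -C₁ * (-C₃) + -C₁ * (-C₃) + 1 * (-C₂)) * S₃ =
      -C₁ * (-2 * s1 * s2 * s3) := by
    rw [hS1', hC1', hS₂, hS₃, hC₂, hC₃]
    rw [hs1e, hc1e]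
    linear_combination (2 * c2 * s3 * c3 ^ 2 + c2 * s3 ^ 3 - s2 * s3 ^ 2 * c3) * p2 +
      (c2 * s3 - c2 ^ 3 * s3 + s2 * c3 + s2 * c2 ^ 2 * c3 - 2 * s2 ^ 2 * c2 * s3) * p3
  rw [hnum, hden]
  have hne : (-2 : ℝ) * s1 * s2 * s3 ≠ 0 := by
    have : (0:ℝ) < 2 * s1 * s2 * s3 := by positivity
    intro h; linarith
  rw [mul_div_assoc, div_self hne, mul_one, hC₁, harg, Real.cos_pi_sub]
end

section
/- Let δ₁, δ₂, δ₃ > 0 with δ₁ + δ₂ + δ₃ = 2π, Sᵢ = sin(δᵢ/2), Cᵢ = cos(δᵢ/2). The map T : ℝ⁴ → ℝ⁴, T(a,b,c,d) = (a + 2dC₃, b + 2dC₂, c + 2dC₁, −d), preserves the quadratic form q(a,b,c,d) = (ab+cd)S₁ + (ac+bd)S₂ + (ad+bc)S₃, and its fixed-point set is the hyperplane {d = 0}. -/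
open Real

theorem stmt_13 (δ₁ δ₂ δ₃ : ℝ) (h₁ : 0 < δ₁) (h₂ : 0 < δ₂) (h₃ : 0 < δ₃)
    (hsum : δ₁ + δ₂ + δ₃ = 2 * π)
    (S₁ S₂ S₃ C₁ C₂ C₃ : ℝ)
    (hS₁ : S₁ = sin (δ₁ / 2)) (hS₂ : S₂ = sin (δ₂ / 2)) (hS₃ : S₃ = sin (δ₃ / 2))
    (hC₁ : C₁ = cos (δ₁ / 2)) (hC₂ : C₂ = cos (δ₂ / 2)) (hC₃ : C₃ = cos (δ₃ / 2))
    (q : ℝ × ℝ × ℝ × ℝ → ℝ)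
    (hq : ∀ a b c d : ℝ, q (a, b, c, d) =
      (a * b + c * d) * S₁ + (a * c + b * d) * S₂ + (a * d + b * c) * S₃)
    (T : ℝ × ℝ × ℝ × ℝ → ℝ × ℝ × ℝ × ℝ)
    (hT : ∀ a b c d : ℝ, T (a, b, c, d) =
      (a + 2 * d * C₃, b + 2 * d * C₂, c + 2 * d * C₁, -d)) :
    (∀ a b c d : ℝ, q (T (a, b, c, d)) = q (a, b, c, d)) ∧
      ∀ a b c d : ℝ, T (a, b, c, d) = (a, b, c, d) ↔ d = 0 := by
  have e1 : δ₁ / 2 = π - (δ₂ / 2 + δ₃ / 2) := by linarith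
  have e2 : δ₂ / 2 = π - (δ₁ / 2 + δ₃ / 2) := by linarith
  have e3 : δ₃ / 2 = π - (δ₁ / 2 + δ₂ / 2) := by linarith
  have hA1 : S₁ = S₂ * C₃ + S₃ * C₂ := by
    rw [hS₁, hS₂, hS₃, hC₂, hC₃, e1, sin_pi_sub, sin_add]; ring
  have hA2 : S₂ = S₁ * C₃ + S₃ * C₁ := by
    rw [hS₁, hS₂, hS₃, hC₁, hC₃, e2, sin_pi_sub, sin_add]; ring
  have hA3 : S₃ = S₁ * C₂ + S₂ * C₁ := by
    rw [hS₁, hS₂, hS₃, hC₁, hC₂, e3, sin_pi_sub, sin_add]; ring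
  have hc1 : C₁ = S₂ * S₃ - C₂ * C₃ := by
    rw [hS₂, hS₃, hC₁, hC₂, hC₃, e1, cos_pi_sub, cos_add]; ring
  have py2 : S₂ ^ 2 + C₂ ^ 2 = 1 := by
    rw [hS₂, hC₂]; exact sin_sq_add_cos_sq _
  have py3 : S₃ ^ 2 + C₃ ^ 2 = 1 := by
    rw [hS₃, hC₃]; exact sin_sq_add_cos_sq _
  have h4 : S₁ * C₂ * C₃ + S₂ * C₁ * C₃ + S₃ * C₁ * C₂ = S₁ * S₂ * S₃ := by
    linear_combination (-C₁) * hA1 + S₁ * hc1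
  have h5 : S₁ * C₁ + S₂ * C₂ + S₃ * C₃ = 2 * S₁ * S₂ * S₃ := by
    linear_combination (-C₁) * hA1 + C₂ * hA2 + C₃ * hA3 + (2 * S₁) * hc1
  constructor
  · intro a b c d
    rw [hT, hq, hq]
    linear_combination (-2 * d * a) * hA3 + (-2 * d * b) * hA2 + (-2 * d * c) * hA1 +
      (4 * d ^ 2) * h4 - (2 * d ^ 2) * h5
  · intro a b c d
    rw [hT, Prod.ext_iff, Prod.ext_iff, Prod.ext_iff]
    constructor
    · rintro ⟨-, -, -, h⟩
      simp only at h
      linarith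
    · rintro rfl
      norm_num
end
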